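/- Conversely, if (f_n) is a sequence in H satisfying c (Σ |a_n|²)^{1/2} ≤ ‖Σ a_n f_n‖ ≤ C (Σ |a_n|²)^{1/2} for all finitely supported sequences (a_n) with constants 0 < c ≤ C, and the closed linear span of (f_n) is H, then there exists a bounded invertible operator T on H and an orthonormal basis (e_n) such that f_n = T e_n for all n. -/

import Mathlib

open scoped InnerProductSpace
open Filter Topology
open scoped ENNReal

/-- A complete sequence satisfying a two-sided ℓ² inequality is the image of an
orthonormal basis under a bounded invertible operator. -/
theorem stmt13 {H : Type*} [NormedAddCommGroup H] [InnerProductSpace ℂ H]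
    [CompleteSpace H] (f : ℕ → H) (c C : ℝ) (hc : 0 < c) (hcC : c ≤ C)
    (hineq : ∀ (s : Finset ℕ) (a : ℕ → ℂ),
      c * Real.sqrt (∑ n ∈ s, ‖a n‖ ^ 2) ≤ ‖∑ n ∈ s, a n • f n‖ ∧
      ‖∑ n ∈ s, a n • f n‖ ≤ C * Real.sqrt (∑ n ∈ s, ‖a n‖ ^ 2))
    (hcomplete : closure (Submodule.span ℂ (Set.range f) : Set H) = Set.univ) :
    ∃ (T : H ≃L[ℂ] H) (e : HilbertBasis ℕ ℂ H), ∀ n : ℕ, f n = T (e n) := by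
  classical
  have hC : 0 < C := lt_of_lt_of_le hc hcC
  have hlow := fun s a => (hineq s a).1
  have hup := fun s a => (hineq s a).2
  -- ℓ² norm as a sum of squares
  have hsq : ∀ x : lp (fun _ : ℕ => ℂ) 2, HasSum (fun n => ‖x n‖ ^ (2:ℕ)) (‖x‖ ^ (2:ℕ)) := by
    intro x
    have h := lp.hasSum_norm (p := 2) (by norm_num) x
    have h3 : ((2:ℝ≥0∞).toReal) = ((2:ℕ):ℝ) := by norm_num
    rw [h3] at h
    simpa [Real.rpow_natCast] using h
  -- summability of the series defining the synthesis operator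
  have hsummable : ∀ x : lp (fun _ : ℕ => ℂ) 2, Summable (fun n => x n • f n) := by
    intro x
    rw [summable_iff_vanishing]
    intro e he
    obtain ⟨ε, hε, hball⟩ := Metric.mem_nhds_iff.mp he
    obtain ⟨s, hs⟩ := (hsq x).summable.vanishing
      (Metric.ball_mem_nhds 0 (by positivity : (0:ℝ) < (ε/C)^2))
    refine ⟨s, fun t ht => ?_⟩
    apply hball
    rw [Metric.mem_ball, dist_zero_right]
    have h1 := hup t (fun n => x n)
    have h2 := hs t ht
    rw [Metric.mem_ball, dist_zero_right, Real.norm_eq_abs] at h2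
    have h3 : ∑ n ∈ t, ‖x n‖ ^ 2 < (ε/C)^2 := lt_of_abs_lt h2
    have h4 : Real.sqrt (∑ n ∈ t, ‖x n‖ ^ 2) < ε / C := by
      have := Real.sqrt_lt_sqrt (by positivity) h3
      rwa [Real.sqrt_sq (by positivity)] at this
    calc ‖∑ n ∈ t, x n • f n‖ ≤ C * Real.sqrt (∑ n ∈ t, ‖x n‖ ^ 2) := h1
      _ < C * (ε / C) := (mul_lt_mul_iff_right₀ hC).mpr h4
      _ = ε := by field_simp
  -- the synthesis operator as a linear map
  let Slin : lp (fun _ : ℕ => ℂ) 2 →ₗ[ℂ] H :=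
    { toFun := fun x => ∑' n, x n • f n
      map_add' := fun x y => by
        simp only [lp.coeFn_add, Pi.add_apply, add_smul]
        exact Summable.tsum_add (hsummable x) (hsummable y)
      map_smul' := fun a x => by
        simp only [lp.coeFn_smul, Pi.smul_apply, smul_eq_mul, RingHom.id_apply, ← smul_smul]
        exact Summable.tsum_const_smul a (hsummable x) }
  have hSdef : ∀ x, Slin x = ∑' n, x n • f n := fun x => rfl
  -- limits of partial sums
  have htend : ∀ x : lp (fun _ : ℕ => ℂ) 2,
      Tendsto (fun s : Finset ℕ => ‖∑ n ∈ s, x n • f n‖) atTop (𝓝 ‖Slin x‖) := by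
    intro x
    rw [hSdef]
    exact ((hsummable x).hasSum).norm
  have hsqrt_tend : ∀ x : lp (fun _ : ℕ => ℂ) 2,
      Tendsto (fun s : Finset ℕ => Real.sqrt (∑ n ∈ s, ‖x n‖ ^ 2)) atTop (𝓝 ‖x‖) := by
    intro x
    have h2 : Tendsto (fun s : Finset ℕ => ∑ n ∈ s, ‖x n‖ ^ 2) atTop (𝓝 (‖x‖^2)) := hsq x
    have h3 := (Real.continuous_sqrt.continuousAt).tendsto.comp h2
    simpa [Function.comp_def, Real.sqrt_sq (norm_nonneg x)] using h3
  have hup' : ∀ x : lp (fun _ : ℕ => ℂ) 2, ‖Slin x‖ ≤ C * ‖x‖ := fun x =>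
    le_of_tendsto_of_tendsto' (htend x) ((hsqrt_tend x).const_mul C) (fun s => hup s _)
  have hlow' : ∀ x : lp (fun _ : ℕ => ℂ) 2, c * ‖x‖ ≤ ‖Slin x‖ := fun x =>
    le_of_tendsto_of_tendsto' ((hsqrt_tend x).const_mul c) (htend x) (fun s => hlow s _)
  -- the synthesis operator as a continuous linear map
  let S : lp (fun _ : ℕ => ℂ) 2 →L[ℂ] H := Slin.mkContinuous C hup'
  have hS : ∀ x, S x = Slin x := fun x => rfl
  -- value on the standard basis vectors
  have hsingle : ∀ n : ℕ, S (lp.single 2 n 1) = f n := by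
    intro n
    rw [hS, hSdef]
    rw [tsum_eq_single n]
    · rw [lp.single_apply_self]; simp
    · intro m hm
      rw [lp.single_apply_ne 2 n 1 hm]
      simp
  -- antilipschitz, hence injective with closed range
  have hanti : AntilipschitzWith (Real.toNNReal c)⁻¹ S := by
    apply S.antilipschitz_of_bound
    intro x
    rw [NNReal.coe_inv, Real.coe_toNNReal c hc.le]
    rw [inv_mul_eq_div, le_div_iff₀ hc, mul_comm]
    exact le_trans (hlow' x) (le_of_eq (by rw [hS]))
  have hclosed : IsClosed (Set.range S) := hanti.isClosed_range S.uniformContinuous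
  have hker : LinearMap.ker (S : lp (fun _ : ℕ => ℂ) 2 →ₗ[ℂ] H) = ⊥ :=
    LinearMap.ker_eq_bot_of_injective (f := S.toLinearMap) hanti.injective
  have hrange : LinearMap.range (S : lp (fun _ : ℕ => ℂ) 2 →ₗ[ℂ] H) = ⊤ := by
    rw [LinearMap.range_eq_top]
    rw [← Set.range_eq_univ]
    apply Set.eq_univ_of_univ_subset
    rw [← hcomplete]
    have h1 : (Submodule.span ℂ (Set.range f) : Set H) ⊆ Set.range S := by
      intro x hx
      have hle : Submodule.span ℂ (Set.range f) ≤ LinearMap.range S.toLinearMap := by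
        rw [Submodule.span_le]
        rintro _ ⟨n, rfl⟩
        exact ⟨lp.single 2 n 1, hsingle n⟩
      obtain ⟨y, hy⟩ := hle hx
      exact ⟨y, hy⟩
    calc closure (Submodule.span ℂ (Set.range f) : Set H) ⊆ closure (Set.range S) :=
          closure_mono h1
      _ = Set.range S := hclosed.closure_eq
  -- the synthesis operator as a continuous linear equivalence
  let Sequiv : lp (fun _ : ℕ => ℂ) 2 ≃L[ℂ] H := ContinuousLinearEquiv.ofBijective S hker hrange
  have hSeq : ∀ n : ℕ, Sequiv (lp.single 2 n 1) = f n := hsingle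
  -- separability of H
  haveI hsep : TopologicalSpace.SeparableSpace H := by
    have h1 : TopologicalSpace.IsSeparable (Set.range f) := (Set.countable_range f).isSeparable
    have h3 := (h1.span (R := ℂ)).closure
    rw [hcomplete] at h3
    exact TopologicalSpace.isSeparable_univ_iff.mp h3
  -- linear independence of f
  have hli : LinearIndependent ℂ f := by
    rw [linearIndependent_iff']
    intro s g hg i hi
    have h1 := hlow s g
    rw [hg, norm_zero] at h1
    have hsqrt0 : Real.sqrt (∑ n ∈ s, ‖g n‖ ^ 2) ≤ 0 := by
      nlinarith [Real.sqrt_nonneg (∑ n ∈ s, ‖g n‖ ^ 2)]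
    have hsum_le : ∑ n ∈ s, ‖g n‖ ^ 2 ≤ 0 :=
      Real.sqrt_eq_zero'.mp (le_antisymm hsqrt0 (Real.sqrt_nonneg _))
    have hsum0 : ∑ n ∈ s, ‖g n‖ ^ 2 = 0 :=
      le_antisymm hsum_le (Finset.sum_nonneg fun n _ => by positivity)
    have h2 := (Finset.sum_eq_zero_iff_of_nonneg (fun n _ => by positivity)).mp hsum0 i hi
    have h3 : ‖g i‖ = 0 := by nlinarith [norm_nonneg (g i)]
    exact norm_eq_zero.mp h3
  -- a Hilbert basis indexed by a set
  obtain ⟨w, b, hb⟩ := exists_hilbertBasis ℂ H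
  have horthw : Orthonormal ℂ ((↑) : w → H) := hb ▸ b.orthonormal
  -- distinct elements of w are far apart
  have hdist : ∀ x ∈ w, ∀ y ∈ w, x ≠ y → (1:ℝ) ≤ dist x y := by
    intro x hx y hy hxy
    have hne : (⟨x, hx⟩ : w) ≠ ⟨y, hy⟩ := fun h => hxy (congrArg Subtype.val h)
    have hinner : ⟪x, y⟫_ℂ = 0 := horthw.2 hne
    have h0 : ⟪x, -y⟫_ℂ = 0 := by rw [inner_neg_right, hinner, neg_zero]
    have h4 : ‖x + -y‖ * ‖x + -y‖ = ‖x‖ * ‖x‖ + ‖-y‖ * ‖-y‖ :=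
      norm_add_sq_eq_norm_sq_add_norm_sq_of_inner_eq_zero x (-y) h0
    have hnx : ‖x‖ = 1 := horthw.1 ⟨x, hx⟩
    have hny : ‖y‖ = 1 := horthw.1 ⟨y, hy⟩
    rw [norm_neg, hnx, hny, ← sub_eq_add_neg] at h4
    rw [dist_eq_norm]
    nlinarith [norm_nonneg (x - y)]
  -- countability of w
  have hcount : w.Countable := by
    have hpd : w.PairwiseDisjoint (fun x => Metric.ball x (1/2 : ℝ)) := by
      intro x hx y hy hxy
      refine Set.disjoint_left.mpr fun z hzx hzy => ?_
      rw [Metric.mem_ball] at hzx hzy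
      have htr : dist x y ≤ dist x z + dist z y := dist_triangle x z y
      rw [dist_comm x z] at htr
      linarith [hdist x hx y hy hxy]
    exact hpd.countable_of_isOpen (fun x _ => Metric.isOpen_ball)
      (fun x _ => ⟨x, Metric.mem_ball_self (by norm_num)⟩)
  -- w is infinite
  have hinf : w.Infinite := by
    intro hwfin
    haveI := hwfin.fintype
    haveI : FiniteDimensional ℂ H :=
      Module.Finite.of_basis b.toOrthonormalBasis.toBasis
    exact Module.Finite.not_linearIndependent_of_infinite f hli
  haveI : Countable w := hcount.to_subtype
  haveI : Infinite w := hinf.to_subtype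
  obtain ⟨dw⟩ := nonempty_denumerable ↥w
  let σ : ℕ ≃ w := (Denumerable.eqv ↥w).symm
  -- an ℕ-indexed Hilbert basis
  have horth : Orthonormal ℂ (fun n => b (σ n)) := b.orthonormal.comp σ σ.injective
  have hspan : ⊤ ≤ (Submodule.span ℂ (Set.range fun n => b (σ n))).topologicalClosure := by
    have hr : Set.range (fun n => b (σ n)) = Set.range ⇑b :=
      σ.surjective.range_comp ⇑b
    rw [hr]
    exact b.dense_span.ge
  let e : HilbertBasis ℕ ℂ H := HilbertBasis.mk horth hspan
  refine ⟨(e.repr.toContinuousLinearEquiv).trans Sequiv, e, fun n => ?_⟩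
  have hrepr : e.repr (e n) = lp.single 2 n 1 := e.repr_self n
  rw [ContinuousLinearEquiv.trans_apply]
  rw [LinearIsometryEquiv.coe_toContinuousLinearEquiv, hrepr, hSeq]
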